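/- Pointwise Lyapunov decrease under the gain-scheduled static output feedback (core of Theorem 1): In the setting of the previous statement (matrices P, R, Hᵢ, Qᵢ, Sᵢ, A₁, A₂, A₃, C₁, C₂, Υ_{1i}, Υ_{2i}, Υ_{3i}, C_{di}, Yᵢ as there, with P ≻ 0, R ≻ 0, Hᵢ ≻ 0), suppose in addition that, given a scalar β, for every i = 1,…,N the matrix X_{di} + L_sC_{si} + C_{si}ᵀL_sᵀ is negative definite, where X_{di} = [[Qᵢ, Sᵢ], [Sᵢᵀ, R]], C_{si} = [Sᵢᵀ R], and L_s is the (p+m)×m matrix whose top p×m block is β times the all-ones matrix and whose bottom m×m block is −I, and suppose there exists L with Yᵢ + LC_{di} + C_{di}ᵀLᵀ ≺ 0 for all i. Then for every α ∈ ℝᴺ with αᵢ ≥ 0 and Σᵢ αᵢ = 1, and every (x, π) ∈ ℝⁿ × ℝ^{nπ}, setting y = C₁x + C₂π, u = −R⁻¹(Σᵢ αᵢSᵢ)ᵀy, if (x, π, u) ≠ 0 and Σᵢ αᵢ(Υ_{1i}x + Υ_{2i}π + Υ_{3i}u) = 0, then 2xᵀP(A₁x + A₂π + A₃u) < 0. 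-/

import Mathlib

open Matrix

/-- A real matrix is negative definite (quadratic-form sense). -/
def NegDef {k : Type*} [Fintype k] (M : Matrix k k ℝ) : Prop :=
  ∀ z : k → ℝ, z ≠ 0 → z ⬝ᵥ M.mulVec z < 0

lemma dot_tmul {k l : Type*} [Fintype k] [Fintype l] (M : Matrix k l ℝ) (v : l → ℝ) (w : k → ℝ) :
    v ⬝ᵥ Mᵀ.mulVec w = (M.mulVec v) ⬝ᵥ w := by
  rw [dotProduct_mulVec, vecMul_transpose]

lemma aux_sum_dot {k : Type*} [Fintype k] {N : ℕ} (α : Fin N → ℝ) (v : Fin N → k → ℝ)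
    (c : k → ℝ) (hv : ∑ i, α i • v i = 0) : ∑ i, α i * (v i ⬝ᵥ c) = 0 := by
  have h : ∑ i, α i * (v i ⬝ᵥ c) = (∑ i, α i • v i) ⬝ᵥ c := by
    simp [dotProduct, Finset.mul_sum, Finset.sum_apply, Finset.sum_mul, mul_assoc]
    rw [Finset.sum_comm]
  rw [h, hv, zero_dotProduct]

lemma dot_symm {k : Type*} [Fintype k] (M : Matrix k k ℝ) (hM : Mᵀ = M) (a b : k → ℝ) :
    a ⬝ᵥ M.mulVec b = b ⬝ᵥ M.mulVec a := by
  rw [← hM, dot_tmul, hM, dotProduct_comm]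

lemma sum_mulVec' {k l : Type*} [Fintype k] [Fintype l] {N : ℕ}
    (M : Fin N → Matrix k l ℝ) (v : l → ℝ) :
    (∑ i, M i).mulVec v = ∑ i, (M i).mulVec v := by
  ext j
  simp [mulVec, dotProduct, Matrix.sum_apply, Finset.sum_mul, Finset.sum_apply]
  exact Finset.sum_comm

lemma quadY {n nπ m p : ℕ} (P : Matrix (Fin n) (Fin n) ℝ) (hP : Pᵀ = P)
    (R : Matrix (Fin m) (Fin m) ℝ) (Hi : Matrix (Fin n) (Fin n) ℝ)
    (Qi : Matrix (Fin p) (Fin p) ℝ) (hQ : Qiᵀ = Qi) (Si : Matrix (Fin p) (Fin m) ℝ)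
    (A₁ : Matrix (Fin n) (Fin n) ℝ) (A₂ : Matrix (Fin n) (Fin nπ) ℝ)
    (A₃ : Matrix (Fin n) (Fin m) ℝ)
    (C₁ : Matrix (Fin p) (Fin n) ℝ) (C₂ : Matrix (Fin p) (Fin nπ) ℝ)
    (x : Fin n → ℝ) (piv : Fin nπ → ℝ) (u : Fin m → ℝ) :
    (Sum.elim x (Sum.elim piv u)) ⬝ᵥ (fromBlocks
      (P * A₁ + A₁ᵀ * P - C₁ᵀ * Qi * C₁ + Hi)
      (fromCols (P * A₂ - C₁ᵀ * Qi * C₂) (P * A₃ - C₁ᵀ * Si))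
      (fromRows (P * A₂ - C₁ᵀ * Qi * C₂)ᵀ (P * A₃ - C₁ᵀ * Si)ᵀ)
      (fromBlocks (-(C₂ᵀ * Qi * C₂)) (-(C₂ᵀ * Si)) (-(C₂ᵀ * Si))ᵀ (-R))).mulVec
        (Sum.elim x (Sum.elim piv u))
    = 2 * (x ⬝ᵥ P.mulVec (A₁.mulVec x + A₂.mulVec piv + A₃.mulVec u)) + x ⬝ᵥ Hi.mulVec x
      - (Sum.elim (C₁.mulVec x + C₂.mulVec piv) u ⬝ᵥ
          (fromBlocks Qi Si Siᵀ R).mulVec (Sum.elim (C₁.mulVec x + C₂.mulVec piv) u)) := by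
  simp only [fromBlocks_mulVec, fromCols_mulVec_sumElim, fromRows_mulVec,
    sumElim_dotProduct_sumElim, add_mulVec, sub_mulVec, neg_mulVec, mulVec_add,
    dotProduct_add, dotProduct_sub, dotProduct_neg, add_dotProduct, transpose_mul,
    transpose_sub, transpose_add, transpose_transpose, transpose_neg, hP, hQ,
    ← mulVec_mulVec, dot_tmul, Sum.elim_comp_inl, Sum.elim_comp_inr]
  linarith [dot_symm P hP (A₁.mulVec x) x, dot_symm P hP (A₂.mulVec piv) x,
    dot_symm P hP (A₃.mulVec u) x, dot_symm Qi hQ (C₂.mulVec piv) (C₁.mulVec x),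
    dotProduct_comm (Si.mulVec u) (C₁.mulVec x), dotProduct_comm (Si.mulVec u) (C₂.mulVec piv)]

/-- Pointwise Lyapunov decrease under the gain-scheduled static output feedback
(core of Theorem 1). -/
theorem pointwise_lyapunov_decrease (n nπ m p N : ℕ) (β : ℝ)
    (P : Matrix (Fin n) (Fin n) ℝ) (hPsymm : P.IsSymm)
    (hPpd : ∀ z : Fin n → ℝ, z ≠ 0 → 0 < z ⬝ᵥ P.mulVec z)
    (R : Matrix (Fin m) (Fin m) ℝ) (hRsymm : R.IsSymm)
    (hRpd : ∀ z : Fin m → ℝ, z ≠ 0 → 0 < z ⬝ᵥ R.mulVec z)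
    (H : Fin N → Matrix (Fin n) (Fin n) ℝ) (hHsymm : ∀ i, (H i).IsSymm)
    (hHpd : ∀ i, ∀ z : Fin n → ℝ, z ≠ 0 → 0 < z ⬝ᵥ (H i).mulVec z)
    (Q : Fin N → Matrix (Fin p) (Fin p) ℝ) (hQsymm : ∀ i, (Q i).IsSymm)
    (S : Fin N → Matrix (Fin p) (Fin m) ℝ)
    (A₁ : Matrix (Fin n) (Fin n) ℝ) (A₂ : Matrix (Fin n) (Fin nπ) ℝ)
    (A₃ : Matrix (Fin n) (Fin m) ℝ)
    (C₁ : Matrix (Fin p) (Fin n) ℝ) (C₂ : Matrix (Fin p) (Fin nπ) ℝ)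
    (Υ₁ : Fin N → Matrix (Fin nπ) (Fin n) ℝ)
    (Υ₂ : Fin N → Matrix (Fin nπ) (Fin nπ) ℝ)
    (Υ₃ : Fin N → Matrix (Fin nπ) (Fin m) ℝ)
    (Cd : Fin N → Matrix (Fin nπ) (Fin n ⊕ (Fin nπ ⊕ Fin m)) ℝ)
    (hCd : ∀ i, Cd i = fromCols (Υ₁ i) (fromCols (Υ₂ i) (Υ₃ i)))
    (Y : Fin N → Matrix (Fin n ⊕ (Fin nπ ⊕ Fin m)) (Fin n ⊕ (Fin nπ ⊕ Fin m)) ℝ)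
    (hY : ∀ i, Y i = fromBlocks
      (P * A₁ + A₁ᵀ * P - C₁ᵀ * Q i * C₁ + H i)
      (fromCols (P * A₂ - C₁ᵀ * Q i * C₂) (P * A₃ - C₁ᵀ * S i))
      (fromRows (P * A₂ - C₁ᵀ * Q i * C₂)ᵀ (P * A₃ - C₁ᵀ * S i)ᵀ)
      (fromBlocks (-(C₂ᵀ * Q i * C₂)) (-(C₂ᵀ * S i)) (-(C₂ᵀ * S i))ᵀ (-R)))
    (Ls : Matrix (Fin p ⊕ Fin m) (Fin m) ℝ)
    (hLs : Ls = fromRows (Matrix.of fun _ _ => β) (-(1 : Matrix (Fin m) (Fin m) ℝ)))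
    (hXd : ∀ i, NegDef (fromBlocks (Q i) (S i) (S i)ᵀ R
      + Ls * fromCols (S i)ᵀ R + (fromCols (S i)ᵀ R)ᵀ * Lsᵀ))
    (hLMI : ∃ L : Matrix (Fin n ⊕ (Fin nπ ⊕ Fin m)) (Fin nπ) ℝ,
      ∀ i, NegDef (Y i + L * Cd i + (Cd i)ᵀ * Lᵀ)) :
    ∀ α : Fin N → ℝ, (∀ i, 0 ≤ α i) → (∑ i, α i) = 1 →
    ∀ (x : Fin n → ℝ) (piv : Fin nπ → ℝ),
      ∀ y : Fin p → ℝ, y = C₁.mulVec x + C₂.mulVec piv →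
      ∀ u : Fin m → ℝ, u = -((R⁻¹ * (∑ i, α i • S i)ᵀ).mulVec y) →
      ¬(x = 0 ∧ piv = 0 ∧ u = 0) →
      (∑ i, α i • ((Υ₁ i).mulVec x + (Υ₂ i).mulVec piv + (Υ₃ i).mulVec u)) = 0 →
      2 * (x ⬝ᵥ P.mulVec (A₁.mulVec x + A₂.mulVec piv + A₃.mulVec u)) < 0 := by
  obtain ⟨L, hL⟩ := hLMI
  intro α hα hα1 x piv y hy u hu hnz hker
  -- the stacked vectors
  set z : (Fin n ⊕ (Fin nπ ⊕ Fin m)) → ℝ := Sum.elim x (Sum.elim piv u) with hzdef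
  set w : (Fin p ⊕ Fin m) → ℝ := Sum.elim y u with hwdef
  have hzne : z ≠ 0 := by
    intro hz
    exact hnz ⟨funext fun j => congrFun hz (Sum.inl j),
      funext fun j => congrFun hz (Sum.inr (Sum.inl j)),
      funext fun j => congrFun hz (Sum.inr (Sum.inr j))⟩
  -- R is invertible
  have hRpdm : R.PosDef := by
    refine PosDef.of_dotProduct_mulVec_pos ?_ ?_
    · rw [IsHermitian, conjTranspose_eq_transpose_of_trivial]; exact hRsymm
    · intro v hv; simpa using hRpd v hv
  have hRRinv : R * R⁻¹ = 1 := mul_nonsing_inv R hRpdm.det_pos.ne'.isUnit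
  -- key kernel facts
  have hCdz : ∑ i, α i • ((Cd i).mulVec z) = 0 := by
    simpa [hCd, fromCols_mulVec_sumElim, hzdef, add_assoc] using hker
  have hRu : R.mulVec u = -((∑ i, α i • S i)ᵀ.mulVec y) := by
    rw [hu, mulVec_neg, mulVec_mulVec, ← Matrix.mul_assoc, hRRinv, Matrix.one_mul]
  have hCsw : ∑ i, α i • ((fromCols (S i)ᵀ R).mulVec w) = 0 := by
    have h1 : ∑ i, α i • ((fromCols (S i)ᵀ R).mulVec w)
        = (∑ i, α i • ((S i)ᵀ.mulVec y)) + (∑ i, α i) • R.mulVec u := by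
      simp [hwdef, fromCols_mulVec_sumElim, smul_add, Finset.sum_add_distrib,
        Finset.sum_smul]
    have h2 : (∑ i, α i • S i)ᵀ.mulVec y = ∑ i, α i • ((S i)ᵀ.mulVec y) := by
      rw [transpose_sum]
      have : ∑ i, (α i • S i)ᵀ = ∑ i, α i • (S i)ᵀ := by simp [transpose_smul]
      rw [this]
      have : (∑ i, α i • (S i)ᵀ).mulVec y = ∑ i, (α i • (S i)ᵀ).mulVec y := sum_mulVec' _ _
      rw [this]
      simp [smul_mulVec]
    rw [h1, hα1, one_smul, hRu, h2]
    simp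
  -- quadratic identities
  have hsplitY : ∀ i, z ⬝ᵥ (Y i + L * Cd i + (Cd i)ᵀ * Lᵀ).mulVec z
      = z ⬝ᵥ (Y i).mulVec z + ((Cd i).mulVec z ⬝ᵥ (z ᵥ* L))
        + ((Cd i).mulVec z ⬝ᵥ Lᵀ.mulVec z) := by
    intro i
    rw [add_mulVec, add_mulVec, dotProduct_add, dotProduct_add]
    congr 1
    · congr 1
      rw [← mulVec_mulVec, dotProduct_mulVec, dotProduct_comm]
    · rw [← mulVec_mulVec, dot_tmul]
  have hsplitX : ∀ i, w ⬝ᵥ (fromBlocks (Q i) (S i) (S i)ᵀ R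
        + Ls * fromCols (S i)ᵀ R + (fromCols (S i)ᵀ R)ᵀ * Lsᵀ).mulVec w
      = w ⬝ᵥ (fromBlocks (Q i) (S i) (S i)ᵀ R).mulVec w
        + ((fromCols (S i)ᵀ R).mulVec w ⬝ᵥ (w ᵥ* Ls))
        + ((fromCols (S i)ᵀ R).mulVec w ⬝ᵥ Lsᵀ.mulVec w) := by
    intro i
    rw [add_mulVec, add_mulVec, dotProduct_add, dotProduct_add]
    congr 1
    · congr 1
      rw [← mulVec_mulVec, dotProduct_mulVec, dotProduct_comm]
    · rw [← mulVec_mulVec, dot_tmul]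
  -- the Y-sum is negative
  have hYneg : ∑ i, α i * (z ⬝ᵥ (Y i).mulVec z) < 0 := by
    obtain ⟨j, hj⟩ : ∃ j, α j ≠ 0 := by
      by_contra h
      push_neg at h
      simp [h] at hα1
    have hlt : ∑ i, α i * (z ⬝ᵥ (Y i + L * Cd i + (Cd i)ᵀ * Lᵀ).mulVec z) < ∑ _i : Fin N, (0:ℝ) := by
      refine Finset.sum_lt_sum (fun i _ => mul_nonpos_of_nonneg_of_nonpos (hα i) (hL i z hzne).le)
        ⟨j, Finset.mem_univ j, mul_neg_of_pos_of_neg ((hα j).lt_of_ne' hj) (hL j z hzne)⟩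
    rw [Finset.sum_const, smul_zero] at hlt
    have e1 : ∑ i, α i * ((Cd i).mulVec z ⬝ᵥ (z ᵥ* L)) = 0 :=
      aux_sum_dot α _ _ hCdz
    have e2 : ∑ i, α i * ((Cd i).mulVec z ⬝ᵥ Lᵀ.mulVec z) = 0 :=
      aux_sum_dot α _ _ hCdz
    have heq : ∑ i, α i * (z ⬝ᵥ (Y i + L * Cd i + (Cd i)ᵀ * Lᵀ).mulVec z)
        = ∑ i, α i * (z ⬝ᵥ (Y i).mulVec z)
          + ∑ i, α i * ((Cd i).mulVec z ⬝ᵥ (z ᵥ* L))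
          + ∑ i, α i * ((Cd i).mulVec z ⬝ᵥ Lᵀ.mulVec z) := by
      rw [← Finset.sum_add_distrib, ← Finset.sum_add_distrib]
      refine Finset.sum_congr rfl fun i _ => ?_
      rw [hsplitY i]; ring
    linarith
  -- the Xd-sum is nonpositive
  have hXneg : ∑ i, α i * (w ⬝ᵥ (fromBlocks (Q i) (S i) (S i)ᵀ R).mulVec w) ≤ 0 := by
    have hle : ∑ i, α i * (w ⬝ᵥ (fromBlocks (Q i) (S i) (S i)ᵀ R
        + Ls * fromCols (S i)ᵀ R + (fromCols (S i)ᵀ R)ᵀ * Lsᵀ).mulVec w) ≤ 0 := by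
      refine Finset.sum_nonpos fun i _ => ?_
      rcases eq_or_ne w 0 with h | h
      · simp [h]
      · exact mul_nonpos_of_nonneg_of_nonpos (hα i) (hXd i w h).le
    have e1 : ∑ i, α i * ((fromCols (S i)ᵀ R).mulVec w ⬝ᵥ (w ᵥ* Ls)) = 0 :=
      aux_sum_dot α _ _ hCsw
    have e2 : ∑ i, α i * ((fromCols (S i)ᵀ R).mulVec w ⬝ᵥ Lsᵀ.mulVec w) = 0 :=
      aux_sum_dot α _ _ hCsw
    have heq : ∑ i, α i * (w ⬝ᵥ (fromBlocks (Q i) (S i) (S i)ᵀ R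
        + Ls * fromCols (S i)ᵀ R + (fromCols (S i)ᵀ R)ᵀ * Lsᵀ).mulVec w)
        = ∑ i, α i * (w ⬝ᵥ (fromBlocks (Q i) (S i) (S i)ᵀ R).mulVec w)
          + ∑ i, α i * ((fromCols (S i)ᵀ R).mulVec w ⬝ᵥ (w ᵥ* Ls))
          + ∑ i, α i * ((fromCols (S i)ᵀ R).mulVec w ⬝ᵥ Lsᵀ.mulVec w) := by
      rw [← Finset.sum_add_distrib, ← Finset.sum_add_distrib]
      refine Finset.sum_congr rfl fun i _ => ?_
      rw [hsplitX i]; ring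
    linarith
  -- H-sum is nonnegative
  have hHnn : 0 ≤ ∑ i, α i * (x ⬝ᵥ (H i).mulVec x) := by
    refine Finset.sum_nonneg fun i _ => ?_
    rcases eq_or_ne x 0 with h | h
    · simp [h]
    · exact mul_nonneg (hα i) (hHpd i x h).le
  -- per-index expansion of the quadratic form of Y i
  have hqi : ∀ i, z ⬝ᵥ (Y i).mulVec z
      = 2 * (x ⬝ᵥ P.mulVec (A₁.mulVec x + A₂.mulVec piv + A₃.mulVec u))
        + x ⬝ᵥ (H i).mulVec x
        - (w ⬝ᵥ (fromBlocks (Q i) (S i) (S i)ᵀ R).mulVec w) := by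
    intro i
    rw [hY i, hzdef, hwdef, hy]
    exact quadY P hPsymm R (H i) (Q i) (hQsymm i) (S i) A₁ A₂ A₃ C₁ C₂ x piv u
  have hsum : ∑ i, α i * (z ⬝ᵥ (Y i).mulVec z)
      = (∑ i, α i) * (2 * (x ⬝ᵥ P.mulVec (A₁.mulVec x + A₂.mulVec piv + A₃.mulVec u)))
        + ∑ i, α i * (x ⬝ᵥ (H i).mulVec x)
        - ∑ i, α i * (w ⬝ᵥ (fromBlocks (Q i) (S i) (S i)ᵀ R).mulVec w) := by
    rw [Finset.sum_mul, ← Finset.sum_add_distrib, ← Finset.sum_sub_distrib]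
    refine Finset.sum_congr rfl fun i _ => ?_
    rw [hqi i]; ring
  rw [hα1, one_mul] at hsum
  linarith
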